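/- Rank via wavelet tree root step: with $S$, $B$, $S_0$, $S_1$ as in the access-correctness setup, for any symbol $c < 2^l$ and position $p \le n$: if the top bit of $c$ is 0 then $\text{rank}_c(S, p) = \text{rank}_{c \bmod 2^{l-1}}(S_0, \text{rank}_0(B, p))$, and if the top bit of $c$ is 1 then $\text{rank}_c(S, p) = \text{rank}_{c \bmod 2^{l-1}}(S_1, \text{rank}_1(B, p))$, where $\text{rank}_c(T, q) = |\{ j < q : T(j) = c \}|$. -/

import Mathlib

-- helper 1: take of filter
theorem wt_take_filter (P : ℕ → Bool) (L : List ℕ) (p : ℕ) :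
    (L.filter P).take ((L.take p).countP P) = (L.take p).filter P := by
  induction L generalizing p with
  | nil => simp
  | cons a L ih =>
    cases p with
    | zero => simp
    | succ p =>
      by_cases h : P a <;> simp [h, List.countP_cons, ih]

-- helper 2: countP of take of ofFn as Finset card
theorem wt_card (n : ℕ) (g : Fin n → ℕ) (P : ℕ → Bool) (p : ℕ) (hp : p ≤ n) :
    ((List.ofFn g).take p).countP P =
      (Finset.univ.filter fun j : Fin n => (j : ℕ) < p ∧ P (g j)).card := by
  induction p with
  | zero => simp
  | succ p ih =>
    have hpn : p < n := hp
    rw [List.take_succ, List.countP_append, ih (le_of_lt hpn)]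
    have hget : (List.ofFn g)[p]? = some (g ⟨p, hpn⟩) := by
      simp [List.getElem?_eq_getElem, List.getElem_ofFn, hpn]
    rw [hget]
    rw [Finset.card_filter, Finset.card_filter]
    set a : Fin n := ⟨p, hpn⟩
    rw [← Finset.sum_erase_add _ _ (Finset.mem_univ a),
        ← Finset.sum_erase_add _ _ (Finset.mem_univ a)]
    have hcong : ∀ j ∈ Finset.univ.erase a,
        (if (j : ℕ) < p + 1 ∧ P (g j) then 1 else 0) =
        (if (j : ℕ) < p ∧ P (g j) then 1 else 0) := by
      intro j hj
      have : (j : ℕ) ≠ p := by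
        intro h
        exact (Finset.mem_erase.mp hj).1 (Fin.ext h)
      have : ((j : ℕ) < p + 1) ↔ ((j : ℕ) < p) := by omega
      simp [this]
    rw [Finset.sum_congr rfl hcong]
    have : (a : ℕ) = p := rfl
    simp [this]

theorem wt_eq (l : ℕ) (hl : 1 ≤ l) (s c : ℕ) (hs : s < 2 ^ l) (hc : c < 2 ^ l) :
    s = c ↔ (Nat.testBit s (l - 1) = Nat.testBit c (l - 1) ∧
      s % 2 ^ (l - 1) = c % 2 ^ (l - 1)) := by
  constructor
  · rintro rfl; exact ⟨rfl, rfl⟩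
  · rintro ⟨h1, h2⟩
    have hll : 2 ^ l = 2 ^ (l - 1) * 2 := by
      rw [← pow_succ]; congr 1; omega
    have hsd : s / 2 ^ (l - 1) < 2 := Nat.div_lt_of_lt_mul (by omega)
    have hcd : c / 2 ^ (l - 1) < 2 := Nat.div_lt_of_lt_mul (by omega)
    rw [Nat.testBit_eq_decide_div_mod_eq, Nat.testBit_eq_decide_div_mod_eq] at h1
    have hdd : s / 2 ^ (l - 1) = c / 2 ^ (l - 1) := by
      interval_cases h : s / 2 ^ (l - 1) <;> interval_cases h' : c / 2 ^ (l - 1) <;>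
        simp_all
    have e1 := Nat.div_add_mod s (2 ^ (l - 1))
    have e2 := Nat.div_add_mod c (2 ^ (l - 1))
    rw [hdd, h2] at e1
    omega

theorem wt_step (n l : ℕ) (hl : 1 ≤ l) (S : Fin n → Fin (2 ^ l)) (c : ℕ) (hc : c < 2 ^ l)
    (p : ℕ) (hp : p ≤ n) (P : ℕ → Bool) (b : Bool)
    (hb : Nat.testBit c (l - 1) = b)
    (hP : ∀ s, P s = true ↔ Nat.testBit s (l - 1) = b) :
    ((List.ofFn fun j => ((S j : ℕ))).take p).count c =
      (((((List.ofFn fun j => ((S j : ℕ))).filter P).map fun s => s % 2 ^ (l - 1)).take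
        ((Finset.univ.filter fun j : Fin n =>
          (j : ℕ) < p ∧ Nat.testBit (S j) (l - 1) = b).card)).count (c % 2 ^ (l - 1))) := by
  set T : List ℕ := List.ofFn fun j => ((S j : ℕ)) with hT
  have hcard : (Finset.univ.filter fun j : Fin n =>
      (j : ℕ) < p ∧ Nat.testBit (S j) (l - 1) = b).card = (T.take p).countP P := by
    rw [wt_card n (fun j => ((S j : ℕ))) P p hp]
    congr 1
    ext j
    simp [hP]
  rw [hcard, ← List.map_take, wt_take_filter]
  show (T.take p).countP (· == c) = _
  rw [show ((((T.take p).filter P).map fun s => s % 2 ^ (l - 1)).count (c % 2 ^ (l - 1)))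
      = (((T.take p).filter P).map fun s => s % 2 ^ (l - 1)).countP (· == c % 2 ^ (l - 1))
      from rfl, List.countP_map, List.countP_filter]
  apply List.countP_congr
  intro s hs
  have hsl : s < 2 ^ l := by
    have : s ∈ T := List.mem_of_mem_take hs
    rw [hT, List.mem_ofFn] at this
    obtain ⟨j, rfl⟩ := this
    exact (S j).2
  simp only [Function.comp, beq_iff_eq, Bool.and_eq_true, hP]
  rw [wt_eq l hl s c hsl hc, hb]
  tauto


/-- Rank via the wavelet tree root step: a rank query for symbol `c` up to
position `p` reduces to a rank query in the child subsequence selected by the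
top bit of `c`, at the position given by a bitmap rank on the root bitmap. -/
theorem stmt19 (n l : ℕ) (hl : 1 ≤ l) (S : Fin n → Fin (2 ^ l))
    (c : ℕ) (hc : c < 2 ^ l) (p : ℕ) (hp : p ≤ n) :
    let B : Fin n → Bool := fun j => Nat.testBit (S j) (l - 1)
    let T : List ℕ := List.ofFn fun j => (S j : ℕ)
    let S0 : List ℕ := (T.filter fun s => !Nat.testBit s (l - 1)).map fun s => s % 2 ^ (l - 1)
    let S1 : List ℕ := (T.filter fun s => Nat.testBit s (l - 1)).map fun s => s % 2 ^ (l - 1)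
    let rankB : Bool → ℕ → ℕ := fun b q =>
      (Finset.univ.filter (fun j : Fin n => (j : ℕ) < q ∧ B j = b)).card
    let rank : ℕ → List ℕ → ℕ → ℕ := fun x L q => (L.take q).count x
    (Nat.testBit c (l - 1) = false →
      rank c T p = rank (c % 2 ^ (l - 1)) S0 (rankB false p)) ∧
    (Nat.testBit c (l - 1) = true →
      rank c T p = rank (c % 2 ^ (l - 1)) S1 (rankB true p)) := by
  intro B T S0 S1 rankB rank
  constructor
  · intro hb
    exact wt_step n l hl S c hc p hp (fun s => !Nat.testBit s (l - 1)) false hb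
      (fun s => by simp)
  · intro hb
    exact wt_step n l hl S c hc p hp (fun s => Nat.testBit s (l - 1)) true hb
      (fun s => by simp)
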